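/- Let G be a finite simple graph whose vertex set is partitioned into k cliques V_1,…,V_k, let A ≥ 3, and let G'_A be the associated constructed graph. If D is a minimal dominating set of G'_A with |D| ≥ A·k, then for every u ∈ V(G) with Z_u ∩ D ≠ ∅ and every index i with u ∈ V_i such that some u' ∈ V_i with u' ≠ u also satisfies Z_{u'} ∩ D ≠ ∅, it holds that |Z_u ∩ D| = 1. -/
import Mathlib


/-- `D` is a dominating set of `G`: every vertex belongs to `D` or has a neighbor in `D`. -/
def Dominates {V : Type*} (G : SimpleGraph V) (D : Set V) : Prop :=
  ∀ v : V, v ∈ D ∨ ∃ u ∈ D, G.Adj u v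

/-- `D` is a minimal dominating set of `G`: dominating, and no proper subset dominates. -/
def MinimalDominatingSet {V : Type*} (G : SimpleGraph V) (D : Set V) : Prop :=
  Dominates G D ∧ ∀ D' : Set V, D' ⊂ D → ¬ Dominates G D'

/-- `I` is an independent set of `G`: no two of its vertices are adjacent. -/
def IndepSet {V : Type*} (G : SimpleGraph V) (I : Set V) : Prop :=
  ∀ u ∈ I, ∀ v ∈ I, ¬ G.Adj u v

/-- The constructed graph `G'_A`.  Vertices are the pairs `(u, a)` with `u ∈ V(G)`,
`1 ≤ a ≤ A` (the copy `(u, a)` lies in the independent set `Z_u`), together with the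
vertices `z_1, …, z_k`.  Two vertices `(u, a)`, `(v, b)` are adjacent iff `uv ∈ E(G)`
(in particular `u ≠ v`); `z_i` is adjacent exactly to the vertices `(u, a)` with
`u ∈ V_i` (i.e. `c u = i`); the `z_i` are pairwise non-adjacent.  The partition of
`V(G)` into the `k` cliques `V_1, …, V_k` is encoded by the map `c : V → Fin k`. -/
def primeGraph {V : Type*} {k : ℕ} (G : SimpleGraph V) (c : V → Fin k) (A : ℕ) :
    SimpleGraph ((V × Fin A) ⊕ Fin k) :=
  SimpleGraph.fromRel fun x y =>
    match x, y with
    | Sum.inl (u, _), Sum.inl (v, _) => G.Adj u v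
    | Sum.inl (u, _), Sum.inr i => c u = i
    | _, _ => False

theorem stmt16 {V : Type*} [Fintype V] (G : SimpleGraph V) (k A : ℕ) (c : V → Fin k)
    (hclique : ∀ u v : V, u ≠ v → c u = c v → G.Adj u v)
    (hsurj : Function.Surjective c) (hA : 3 ≤ A)
    (D : Set ((V × Fin A) ⊕ Fin k))
    (hD : MinimalDominatingSet (primeGraph G c A) D) (hcard : A * k ≤ D.ncard)
    (u : V) (hu : {x ∈ D | ∃ a : Fin A, x = Sum.inl (u, a)}.Nonempty)
    (u' : V) (hne : u' ≠ u) (hsame : c u' = c u)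
    (hu' : {x ∈ D | ∃ a : Fin A, x = Sum.inl (u', a)}.Nonempty) :
    {x ∈ D | ∃ a : Fin A, x = Sum.inl (u, a)}.ncard = 1 := by
  obtain ⟨x0, hx0D, a0, hx0eq⟩ := hu
  obtain ⟨y', hy'D, b', hy'eq⟩ := hu'
  rw [Set.ncard_eq_one]
  refine ⟨x0, Set.eq_singleton_iff_unique_mem.mpr ⟨⟨hx0D, a0, hx0eq⟩, ?_⟩⟩
  rintro y ⟨hyD, a, rfl⟩
  by_contra hyx
  have hadj : G.Adj u' u := hclique u' u hne hsame
  apply hD.2 (D \ {Sum.inl (u, a)})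
    (Set.sdiff_singleton_ssubset.mpr hyD)
  intro v
  by_cases hvD : v ∈ D
  · by_cases hvx : v = Sum.inl (u, a)
    · right
      refine ⟨y', ⟨hy'D, ?_⟩, ?_⟩
      · simp [hy'eq, hne]
      · subst hvx hy'eq
        exact ⟨by simp [hne], Or.inl hadj⟩
    · exact Or.inl ⟨hvD, hvx⟩
  · rcases hD.1 v with h | ⟨w, hwD, hwv⟩
    · exact absurd h hvD
    right
    by_cases hwx : w = Sum.inl (u, a)
    · subst hwx
      subst hx0eq
      refine ⟨Sum.inl (u, a0), ⟨hx0D, fun h => hyx h.symm⟩, ?_⟩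
      obtain ⟨hne', hrel⟩ := hwv
      match v, hrel with
      | Sum.inl (p, b), hrel =>
        have hup : G.Adj u p := by
          rcases hrel with h | h
          · exact h
          · exact h.symm
        exact ⟨by simp [hup.ne], Or.inl hup⟩
      | Sum.inr i, hrel =>
        have hci : c u = i := by
          rcases hrel with h | h
          · exact h
          · exact h.elim
        exact ⟨by simp, Or.inl hci⟩
    · exact ⟨w, ⟨hwD, hwx⟩, hwv⟩
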